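/- Let p be a positive integer, let V₁, V₂ be real orthogonal p×p matrices (V_iᵀV_i = I), let D₁, D₂ be invertible diagonal real p×p matrices, and set Ω = D₁⁻¹V₁ᵀV₂D₂ and S = V₁D₁²V₁ᵀ + V₂D₂²V₂ᵀ. Then Ω⁻¹ + Ωᵀ is invertible, and D₁V₁ᵀ S⁻¹ V₂D₂ = (Ω⁻¹ + Ωᵀ)⁻¹. -/

import Mathlib

open Matrix

/-- The cross-term matrix identity in the proof of Proposition 1:
with `Ω = D₁⁻¹V₁ᵀV₂D₂` and `S = V₁D₁²V₁ᵀ + V₂D₂²V₂ᵀ`, the matrix `Ω⁻¹ + Ωᵀ` is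
invertible and `D₁V₁ᵀ S⁻¹ V₂D₂ = (Ω⁻¹ + Ωᵀ)⁻¹`. -/
theorem svd_cross_term_identity
    (p : ℕ) (hp : 0 < p)
    (V₁ V₂ : Matrix (Fin p) (Fin p) ℝ)
    (hV₁ : V₁ᵀ * V₁ = 1) (hV₂ : V₂ᵀ * V₂ = 1)
    (d₁ d₂ : Fin p → ℝ) (hd₁ : ∀ i, d₁ i ≠ 0) (hd₂ : ∀ i, d₂ i ≠ 0) :
    let D₁ := Matrix.diagonal d₁
    let D₂ := Matrix.diagonal d₂
    let Ωm := D₁⁻¹ * V₁ᵀ * V₂ * D₂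
    let S := V₁ * D₁ ^ 2 * V₁ᵀ + V₂ * D₂ ^ 2 * V₂ᵀ
    IsUnit (Ωm⁻¹ + Ωmᵀ) ∧
      D₁ * V₁ᵀ * S⁻¹ * (V₂ * D₂) = (Ωm⁻¹ + Ωmᵀ)⁻¹ := by
  intro D₁ D₂ Ωm S
  -- basic invertibility facts
  have hV₁' : V₁ * V₁ᵀ = 1 := mul_eq_one_comm.mp hV₁
  have hV₂' : V₂ * V₂ᵀ = 1 := mul_eq_one_comm.mp hV₂
  have hdet₁ : IsUnit V₁.det := IsUnit.of_mul_eq_one V₁ᵀ.det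
    (by rw [mul_comm, ← Matrix.det_mul, hV₁, Matrix.det_one])
  have hdet₂ : IsUnit V₂.det := IsUnit.of_mul_eq_one V₂ᵀ.det
    (by rw [mul_comm, ← Matrix.det_mul, hV₂, Matrix.det_one])
  have hUV₁ : IsUnit V₁ := (Matrix.isUnit_iff_isUnit_det _).mpr hdet₁
  have hUV₂ : IsUnit V₂ := (Matrix.isUnit_iff_isUnit_det _).mpr hdet₂
  have hUV₁T : IsUnit V₁ᵀ := (Matrix.isUnit_iff_isUnit_det _).mpr
    (by rwa [Matrix.det_transpose])
  have hUD₁ : IsUnit D₁ := by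
    rw [Matrix.isUnit_iff_isUnit_det, Matrix.det_diagonal]
    exact (Finset.prod_ne_zero_iff.mpr fun i _ => hd₁ i).isUnit
  have hUD₂ : IsUnit D₂ := by
    rw [Matrix.isUnit_iff_isUnit_det, Matrix.det_diagonal]
    exact (Finset.prod_ne_zero_iff.mpr fun i _ => hd₂ i).isUnit
  have hV₁inv : V₁⁻¹ = V₁ᵀ := Matrix.inv_eq_right_inv hV₁'
  have hV₂inv : V₂⁻¹ = V₂ᵀ := Matrix.inv_eq_right_inv hV₂'
  have hUΩ : IsUnit Ωm :=
    (((Matrix.isUnit_nonsing_inv_iff.mpr hUD₁).mul hUV₁T).mul hUV₂).mul hUD₂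
  -- Ω Ωᵀ and the positive-definite matrix A = 1 + Ω Ωᵀ
  set A : Matrix (Fin p) (Fin p) ℝ := 1 + Ωm * Ωmᵀ with hA
  have hAconj : Ωm * Ωmᵀ = Ωm * Ωmᴴ := by
    rw [Matrix.conjTranspose_eq_transpose_of_trivial]
  have hApos : A.PosDef := by
    rw [hA, hAconj]
    exact Matrix.PosDef.add_posSemidef Matrix.PosDef.one
      (Matrix.posSemidef_self_mul_conjTranspose Ωm)
  have hUA : IsUnit A := hApos.isUnit
  -- key factorization : Ωm⁻¹ + Ωmᵀ = Ωm⁻¹ * A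
  have hfac : Ωm⁻¹ + Ωmᵀ = Ωm⁻¹ * A := by
    rw [hA, mul_add, mul_one, ← mul_assoc, Matrix.nonsing_inv_mul _
      (Matrix.isUnit_iff_isUnit_det _ |>.mp hUΩ), one_mul]
  constructor
  · rw [hfac]; exact (Matrix.isUnit_nonsing_inv_iff.mpr hUΩ).mul hUA
  -- key factorization of S
  have hD₁T : D₁ᵀ = D₁ := Matrix.diagonal_transpose d₁
  have hD₂T : D₂ᵀ = D₂ := Matrix.diagonal_transpose d₂
  have hV₁Tinv : V₁ᵀ⁻¹ = V₁ := Matrix.inv_eq_right_inv hV₁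
  have hD₁inv : D₁ * D₁⁻¹ = 1 :=
    Matrix.mul_nonsing_inv _ (Matrix.isUnit_iff_isUnit_det _ |>.mp hUD₁)
  have hD₁inv' : D₁⁻¹ * D₁ = 1 :=
    Matrix.nonsing_inv_mul _ (Matrix.isUnit_iff_isUnit_det _ |>.mp hUD₁)
  have hΩT : Ωmᵀ = D₂ * V₂ᵀ * V₁ * D₁⁻¹ := by
    show (D₁⁻¹ * V₁ᵀ * V₂ * D₂)ᵀ = _
    rw [Matrix.transpose_mul, Matrix.transpose_mul, Matrix.transpose_mul,
      Matrix.transpose_nonsing_inv, hD₁T, hD₂T, Matrix.transpose_transpose]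
    simp only [mul_assoc]
  have hmid : (V₁ * D₁) * (Ωm * Ωmᵀ) * (D₁ * V₁ᵀ) = V₂ * D₂ ^ 2 * V₂ᵀ := by
    rw [hΩT]
    calc V₁ * D₁ * (D₁⁻¹ * V₁ᵀ * V₂ * D₂ * (D₂ * V₂ᵀ * V₁ * D₁⁻¹)) * (D₁ * V₁ᵀ)
        = V₁ * (D₁ * D₁⁻¹) * V₁ᵀ * V₂ * (D₂ * D₂) * V₂ᵀ * (V₁ * (D₁⁻¹ * D₁) * V₁ᵀ) := by
          simp only [mul_assoc]
      _ = V₂ * D₂ ^ 2 * V₂ᵀ := by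
          rw [hD₁inv, hD₁inv', mul_one, hV₁', one_mul, mul_one, sq]
  have hSfac : S = (V₁ * D₁) * A * (D₁ * V₁ᵀ) := by
    show V₁ * D₁ ^ 2 * V₁ᵀ + V₂ * D₂ ^ 2 * V₂ᵀ = _
    rw [hA, mul_add, add_mul, mul_one, ← hmid, mul_assoc (V₁ * D₁) (Ωm * Ωmᵀ)]
    congr 1
    rw [sq]; simp only [mul_assoc]
  -- compute S⁻¹
  have hSinv : S⁻¹ = V₁ * D₁⁻¹ * A⁻¹ * (D₁⁻¹ * V₁ᵀ) := by
    rw [hSfac]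
    simp only [Matrix.mul_inv_rev, hV₁Tinv, hV₁inv, mul_assoc]
  have hlhs : D₁ * V₁ᵀ * S⁻¹ * (V₂ * D₂) = A⁻¹ * Ωm := by
    rw [hSinv]
    calc D₁ * V₁ᵀ * (V₁ * D₁⁻¹ * A⁻¹ * (D₁⁻¹ * V₁ᵀ)) * (V₂ * D₂)
        = D₁ * (V₁ᵀ * V₁) * D₁⁻¹ * A⁻¹ * (D₁⁻¹ * V₁ᵀ * V₂ * D₂) := by
          simp only [mul_assoc]
      _ = A⁻¹ * Ωm := by rw [hV₁, mul_one, hD₁inv, one_mul]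
  have hrhs : (Ωm⁻¹ + Ωmᵀ)⁻¹ = A⁻¹ * Ωm := by
    rw [hfac, Matrix.mul_inv_rev, Matrix.nonsing_inv_nonsing_inv _
      (Matrix.isUnit_iff_isUnit_det _ |>.mp hUΩ)]
  rw [hlhs, hrhs]
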